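/- Let p, N ≥ 1, let z_1, …, z_N ∈ ℝ^p be the (partly unobserved) true control covariates, z*_1, …, z*_N ∈ ℝ^p their error-prone measurements, z̄ ∈ ℝ^p the true treated covariate mean, and z̄* ∈ ℝ^p the measured treated covariate mean. Let S ⊆ {1,…,p} be a set of error-free coordinates, i.e. z*_{i,j} = z_{i,j} for all i and all j ∈ S, and z̄*_j = z̄_j for all j ∈ S. If θ̂* is a local minimum of the naive dual objective L*(θ) = log(Σ_{i=1}^N exp⟨θ, z*_i⟩) − ⟨θ, z̄*⟩, then the naive entropy balancing weights ŵ*_i = exp⟨θ̂*, z*_i⟩ / Σ_{j=1}^N exp⟨θ̂*, z*_j⟩ exactly balance the true covariates in every error-free coordinate: Σ_{i=1}^N ŵ*_i z_{i,j} = z̄_j for all j ∈ S. -/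

import Mathlib

open scoped RealInnerProductSpace BigOperators

set_option maxHeartbeats 1000000 in
/-- If `θ̂*` is a local minimum of the naive EB dual objective computed on the
error-prone measurements `z*` and the measured treated mean `z̄*`, then the naive EB weights
exactly balance the true covariates in every error-free coordinate `j ∈ S`. -/
theorem naive_eb_balances_error_free_coordinates
    (p N : ℕ) (hp : 1 ≤ p) (hN : 1 ≤ N)
    (z zstar : Fin N → EuclideanSpace ℝ (Fin p))
    (zbar zbarstar : EuclideanSpace ℝ (Fin p))
    (S : Set (Fin p))
    (hfree : ∀ i, ∀ j ∈ S, zstar i j = z i j)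
    (hfreebar : ∀ j ∈ S, zbarstar j = zbar j)
    (θhat : EuclideanSpace ℝ (Fin p))
    (hmin : IsLocalMin
      (fun θ : EuclideanSpace ℝ (Fin p) =>
        Real.log (∑ i, Real.exp ⟪θ, zstar i⟫) - ⟪θ, zbarstar⟫) θhat)
    (w : Fin N → ℝ)
    (hw : ∀ i, w i = Real.exp ⟪θhat, zstar i⟫ / ∑ j, Real.exp ⟪θhat, zstar j⟫) :
    ∀ j ∈ S, ∑ i, w i * z i j = zbar j := by
  intro j hj
  set a : Fin N → ℝ := fun i => ⟪θhat, zstar i⟫ with ha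
  set c : Fin N → ℝ := fun i => zstar i j with hc
  set Se : ℝ := ∑ i, Real.exp (a i) with hS2
  have hS2pos : 0 < Se := by
    haveI : Nonempty (Fin N) := Fin.pos_iff_nonempty.mp hN
    exact Finset.sum_pos (fun i _ => Real.exp_pos _) Finset.univ_nonempty
  -- the direction e_j
  set e : EuclideanSpace ℝ (Fin p) := EuclideanSpace.single j (1:ℝ) with he
  set φ : ℝ → EuclideanSpace ℝ (Fin p) := fun t => θhat + t • e with hφ
  have hφ0 : φ 0 = θhat := by simp [hφ]
  have hinner : ∀ t i, ⟪φ t, zstar i⟫ = a i + t * c i := by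
    intro t i
    simp [hφ, inner_add_left, real_inner_smul_left, he,
      EuclideanSpace.inner_single_left, ha, hc]
  have hinnerbar : ∀ t, ⟪φ t, zbarstar⟫ = ⟪θhat, zbarstar⟫ + t * zbarstar j := by
    intro t
    simp [hφ, inner_add_left, real_inner_smul_left, he,
      EuclideanSpace.inner_single_left]
  set g : ℝ → ℝ := fun t =>
    Real.log (∑ i, Real.exp (a i + t * c i)) - (⟪θhat, zbarstar⟫ + t * zbarstar j) with hg
  have heq : ∀ t, g t =
      Real.log (∑ i, Real.exp ⟪φ t, zstar i⟫) - ⟪φ t, zbarstar⟫ := by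
    intro t
    simp only [g]
    congr 1
    · congr 1; exact Finset.sum_congr rfl fun i _ => by rw [hinner]
    · rw [hinnerbar]
  have hmin' : IsLocalMin g 0 := by
    have hcont : Continuous φ := continuous_const.add (continuous_id.smul continuous_const)
    have ht : Filter.Tendsto φ (nhds 0) (nhds θhat) := by
      have := hcont.continuousAt (x := 0)
      rwa [ContinuousAt, hφ0] at this
    have hev := ht.eventually hmin
    refine hev.mono fun t h => ?_
    rw [heq t, heq 0, hφ0]
    exact h
  have hsum : HasDerivAt (fun t => ∑ i, Real.exp (a i + t * c i))
      (∑ i, c i * Real.exp (a i)) 0 := by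
    apply HasDerivAt.fun_sum
    intro i _
    have h1 : HasDerivAt (fun t : ℝ => a i + t * c i) (c i) 0 :=
      (hasDerivAt_mul_const (c i)).const_add (a i)
    have := h1.exp
    simpa [mul_comm] using this
  have hsum0 : (∑ i, Real.exp (a i + 0 * c i)) = Se := by simp [hS2]
  have hlog : HasDerivAt (fun t => Real.log (∑ i, Real.exp (a i + t * c i)))
      ((∑ i, c i * Real.exp (a i)) / Se) 0 := by
    have := hsum.log (by rw [hsum0]; exact ne_of_gt hS2pos)
    rwa [hsum0] at this
  have hlin : HasDerivAt (fun t : ℝ => ⟪θhat, zbarstar⟫ + t * zbarstar j) (zbarstar j) 0 :=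
    (hasDerivAt_mul_const (zbarstar j)).const_add _
  have hgderiv : HasDerivAt g ((∑ i, c i * Real.exp (a i)) / Se - zbarstar j) 0 :=
    hlog.sub hlin
  have hzero := hmin'.hasDerivAt_eq_zero hgderiv
  have hkey : (∑ i, c i * Real.exp (a i)) / Se = zbarstar j := by linarith [hzero, sub_eq_zero.mp (by linarith [hzero] : (∑ i, c i * Real.exp (a i)) / Se - zbarstar j = 0)]
  calc ∑ i, w i * z i j = (∑ i, c i * Real.exp (a i)) / Se := by
        rw [Finset.sum_div]
        apply Finset.sum_congr rfl
        intro i _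
        rw [hw i, ← hfree i j hj]
        field_simp [ha, hS2, hc]
        ring
    _ = zbar j := by rw [hkey, hfreebar j hj]
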